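/- In R = C[X,Y,Z,U,V,W,T] with the ideal I generated by V − XZ + X²U + Y, T − Z² + ZXU + YU, and W + XU − Z, the monomials not divisible by any of W², ZUV, ZW, XT, XU, XW form a C-vector-space basis of the quotient R/I. -/

import Mathlib

open MvPolynomial

namespace Stmt5

/-- Variables of `ℂ[X,Y,Z,U,V,W,T]`: `X = 0`, `Z = 1`, `Y = 2`, `W = 3`,
`V = 4`, `U = 5`, `T = 6`. -/
noncomputable def X : MvPolynomial (Fin 7) ℂ := MvPolynomial.X 0
noncomputable def Z : MvPolynomial (Fin 7) ℂ := MvPolynomial.X 1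
noncomputable def Y : MvPolynomial (Fin 7) ℂ := MvPolynomial.X 2
noncomputable def W : MvPolynomial (Fin 7) ℂ := MvPolynomial.X 3
noncomputable def V : MvPolynomial (Fin 7) ℂ := MvPolynomial.X 4
noncomputable def U : MvPolynomial (Fin 7) ℂ := MvPolynomial.X 5
noncomputable def T : MvPolynomial (Fin 7) ℂ := MvPolynomial.X 6

/-- The reduced Plücker ideal for `C₂ = sp(4)`. -/
noncomputable def I : Ideal (MvPolynomial (Fin 7) ℂ) :=
  Ideal.span {V - X * Z + X ^ 2 * U + Y, T - Z ^ 2 + Z * X * U + Y * U,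
    W + X * U - Z}

/-- The exponent vectors of the six leading monomials
`W², ZUV, ZW, XT, XU, XW`. -/
noncomputable def leadMonos : List (Fin 7 →₀ ℕ) :=
  [Finsupp.single 3 2,
   Finsupp.single 1 1 + Finsupp.single 5 1 + Finsupp.single 4 1,
   Finsupp.single 1 1 + Finsupp.single 3 1,
   Finsupp.single 0 1 + Finsupp.single 6 1,
   Finsupp.single 0 1 + Finsupp.single 5 1,
   Finsupp.single 0 1 + Finsupp.single 3 1]

/-- A monomial `m` is admissible if it is divisible by none of
`W², ZUV, ZW, XT, XU, XW`. -/
def Admissible (m : Fin 7 →₀ ℕ) : Prop := ∀ e ∈ leadMonos, ¬ e ≤ m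

open AddMonoidAlgebra
noncomputable def g : Fin 7 → MvPolynomial (Fin 4) ℂ := fun i =>
  match i with
  | 0 => MvPolynomial.X 0
  | 1 => MvPolynomial.X 1
  | 2 => MvPolynomial.X 2
  | 3 => MvPolynomial.X 1 - MvPolynomial.X 0 * MvPolynomial.X 3
  | 4 => MvPolynomial.X 0 * MvPolynomial.X 1 - (MvPolynomial.X 0)^2 * MvPolynomial.X 3
          - MvPolynomial.X 2
  | 5 => MvPolynomial.X 3
  | 6 => (MvPolynomial.X 1)^2 - MvPolynomial.X 1 * MvPolynomial.X 0 * MvPolynomial.X 3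
          - MvPolynomial.X 2 * MvPolynomial.X 3

noncomputable def phi : MvPolynomial (Fin 7) ℂ →ₐ[ℂ] MvPolynomial (Fin 4) ℂ := aeval g

lemma phi_X : phi X = MvPolynomial.X 0 := by simp [phi, X]; rfl
lemma phi_Z : phi Z = MvPolynomial.X 1 := by simp [phi, Z]; rfl
lemma phi_Y : phi Y = MvPolynomial.X 2 := by simp [phi, Y]; rfl
lemma phi_U : phi U = MvPolynomial.X 3 := by simp [phi, U]; rfl
lemma phi_W : phi W = MvPolynomial.X 1 - MvPolynomial.X 0 * MvPolynomial.X 3 := by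
  simp [phi, W]; rfl
lemma phi_V : phi V = MvPolynomial.X 0 * MvPolynomial.X 1 - (MvPolynomial.X 0)^2 * MvPolynomial.X 3
    - MvPolynomial.X 2 := by simp [phi, V]; rfl
lemma phi_T : phi T = (MvPolynomial.X 1)^2
    - MvPolynomial.X 1 * MvPolynomial.X 0 * MvPolynomial.X 3
    - MvPolynomial.X 2 * MvPolynomial.X 3 := by simp [phi, T]; rfl

lemma I_le_ker : I ≤ RingHom.ker phi := by
  rw [I, Ideal.span_le]
  rintro p (rfl | rfl | rfl) <;>
    simp only [SetLike.mem_coe, RingHom.mem_ker, map_add, map_sub, map_mul,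
      map_pow, phi_X, phi_Z, phi_Y, phi_W, phi_V, phi_U, phi_T] <;> ring

noncomputable def psi : MvPolynomial (Fin 4) ℂ →ₐ[ℂ] MvPolynomial (Fin 7) ℂ :=
  aeval fun j => match j with | 0 => X | 1 => Z | 2 => Y | 3 => U

lemma psi0 : psi (MvPolynomial.X 0) = X := by simp [psi]
lemma psi1 : psi (MvPolynomial.X 1) = Z := by simp [psi]
lemma psi2 : psi (MvPolynomial.X 2) = Y := by simp [psi]
lemma psi3 : psi (MvPolynomial.X 3) = U := by simp [psi]

lemma gen1_mem : V - X * Z + X ^ 2 * U + Y ∈ I := Ideal.subset_span (by left; rfl)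
lemma gen2_mem : T - Z ^ 2 + Z * X * U + Y * U ∈ I :=
  Ideal.subset_span (by right; left; rfl)
lemma gen3_mem : W + X * U - Z ∈ I := Ideal.subset_span (by right; right; rfl)

open Ideal.Quotient in
lemma mk_psi_phi (p : MvPolynomial (Fin 7) ℂ) :
    Ideal.Quotient.mkₐ ℂ I (psi (phi p)) = Ideal.Quotient.mkₐ ℂ I p := by
  have keyX : (Ideal.Quotient.mkₐ ℂ I) (psi (phi X)) = Ideal.Quotient.mkₐ ℂ I X := by
    rw [phi_X, psi0]
  have keyZ : (Ideal.Quotient.mkₐ ℂ I) (psi (phi Z)) = Ideal.Quotient.mkₐ ℂ I Z := by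
    rw [phi_Z, psi1]
  have keyY : (Ideal.Quotient.mkₐ ℂ I) (psi (phi Y)) = Ideal.Quotient.mkₐ ℂ I Y := by
    rw [phi_Y, psi2]
  have keyU : (Ideal.Quotient.mkₐ ℂ I) (psi (phi U)) = Ideal.Quotient.mkₐ ℂ I U := by
    rw [phi_U, psi3]
  have pw : psi (phi W) = Z - X * U := by
    rw [phi_W]; simp only [map_sub, map_mul, psi0, psi1, psi3]
  have keyW : (Ideal.Quotient.mkₐ ℂ I) (psi (phi W)) = Ideal.Quotient.mkₐ ℂ I W := by
    rw [pw, mkₐ_eq_mk, Ideal.Quotient.eq,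
      show Z - X * U - W = -(W + X * U - Z) by ring]
    exact I.neg_mem gen3_mem
  have pv : psi (phi V) = X * Z - X ^ 2 * U - Y := by
    rw [phi_V]; simp only [map_sub, map_mul, map_pow, psi0, psi1, psi2, psi3]
  have keyV : (Ideal.Quotient.mkₐ ℂ I) (psi (phi V)) = Ideal.Quotient.mkₐ ℂ I V := by
    rw [pv, mkₐ_eq_mk, Ideal.Quotient.eq,
      show X * Z - X ^ 2 * U - Y - V = -(V - X * Z + X ^ 2 * U + Y) by ring]
    exact I.neg_mem gen1_mem
  have pt : psi (phi T) = Z ^ 2 - Z * X * U - Y * U := by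
    rw [phi_T]; simp only [map_sub, map_mul, map_pow, psi0, psi1, psi2, psi3]
  have keyT : (Ideal.Quotient.mkₐ ℂ I) (psi (phi T)) = Ideal.Quotient.mkₐ ℂ I T := by
    rw [pt, mkₐ_eq_mk, Ideal.Quotient.eq,
      show Z ^ 2 - Z * X * U - Y * U - T = -(T - Z ^ 2 + Z * X * U + Y * U) by ring]
    exact I.neg_mem gen2_mem
  have : (Ideal.Quotient.mkₐ ℂ I).comp (psi.comp phi) = Ideal.Quotient.mkₐ ℂ I := by
    apply MvPolynomial.algHom_ext
    intro i
    match i with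
    | 0 => exact keyX
    | 1 => exact keyZ
    | 2 => exact keyY
    | 3 => exact keyW
    | 4 => exact keyV
    | 5 => exact keyU
    | 6 => exact keyT
  exact DFunLike.congr_fun this p


open AddMonoidAlgebra

abbrev S4 := MvPolynomial (Fin 4) ℂ

lemma supDeg_monomial (s : Fin 4 →₀ ℕ) {c : ℂ} (hc : c ≠ 0) :
    supDegree toLex (monomial s c : S4) = toLex s := by
  rw [← single_eq_monomial]; exact supDegree_single_ne_zero s hc

lemma leadCoeff_monomial (s : Fin 4 →₀ ℕ) (c : ℂ) :
    leadingCoeff toLex (monomial s c : S4) = c := by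
  rw [← single_eq_monomial]; exact leadingCoeff_single toLex.injective s c

lemma lexlt {a b : Fin 4 →₀ ℕ} (i : Fin 4) (h1 : ∀ j < i, a j = b j) (h2 : a i < b i) :
    toLex a < toLex b := Finsupp.Lex.lt_iff.mpr ⟨i, h1, h2⟩

lemma lead_pair {b : Fin 4 →₀ ℕ} {p : S4} {c : ℂ}
    (hp : supDegree toLex p < toLex b) (hc : c ≠ 0) :
    supDegree toLex (p + monomial b c) = toLex b ∧
      leadingCoeff toLex (p + monomial b c) = c := by
  have hq : supDegree toLex (monomial b c : S4) = toLex b := supDeg_monomial b hc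
  rw [← hq] at hp
  exact ⟨by rw [supDegree_add_eq_right hp, hq],
    by rw [leadingCoeff_add_eq_right hp, leadCoeff_monomial]⟩


open AddMonoidAlgebra

noncomputable def sgl : Fin 4 → ℕ → (Fin 4 →₀ ℕ) := fun i k => Finsupp.single i k

noncomputable def sigma : Fin 7 → (Fin 4 →₀ ℕ) := fun i =>
  match i with
  | 0 => sgl 0 1
  | 1 => sgl 1 1
  | 2 => sgl 2 1
  | 3 => sgl 0 1 + sgl 3 1
  | 4 => sgl 0 2 + sgl 3 1
  | 5 => sgl 3 1
  | 6 => sgl 0 1 + sgl 1 1 + sgl 3 1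

noncomputable def eps : Fin 7 → ℂ := fun i =>
  match i with
  | 0 => 1 | 1 => 1 | 2 => 1 | 3 => -1 | 4 => -1 | 5 => 1 | 6 => -1

lemma eps_ne_zero (i : Fin 7) : eps i ≠ 0 := by
  match i with
  | 0 | 1 | 5 => exact one_ne_zero
  | 2 => exact one_ne_zero
  | 3 | 4 | 6 => exact neg_ne_zero.mpr one_ne_zero

lemma X_eq_mono (i : Fin 4) : (MvPolynomial.X i : S4) = monomial (sgl i 1) 1 := rfl

lemma g3_eq : g 3 = monomial (sgl 1 1) (1:ℂ) + monomial (sgl 0 1 + sgl 3 1) (-1) := by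
  show MvPolynomial.X 1 - MvPolynomial.X 0 * MvPolynomial.X 3 = _
  rw [X_eq_mono, X_eq_mono, X_eq_mono, MvPolynomial.monomial_mul]
  rw [sub_eq_add_neg, ← map_neg]
  norm_num

lemma g4_eq : g 4 = (monomial (sgl 2 1) (-1:ℂ) + monomial (sgl 0 1 + sgl 1 1) 1)
    + monomial (sgl 0 2 + sgl 3 1) (-1) := by
  show MvPolynomial.X 0 * MvPolynomial.X 1 - (MvPolynomial.X 0)^2 * MvPolynomial.X 3
      - MvPolynomial.X 2 = _
  rw [MvPolynomial.X_pow_eq_monomial, X_eq_mono, X_eq_mono, X_eq_mono, X_eq_mono,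
    MvPolynomial.monomial_mul, MvPolynomial.monomial_mul]
  show _ = _ + monomial (Finsupp.single 0 2 + Finsupp.single 3 1) (-1:ℂ)
  rw [sub_eq_add_neg, sub_eq_add_neg, ← map_neg, ← map_neg]
  norm_num [sgl]
  ring

lemma g6_eq : g 6 = (monomial (sgl 2 1 + sgl 3 1) (-1:ℂ) + monomial (sgl 1 2) 1)
    + monomial (sgl 0 1 + sgl 1 1 + sgl 3 1) (-1) := by
  show (MvPolynomial.X 1)^2 - MvPolynomial.X 1 * MvPolynomial.X 0 * MvPolynomial.X 3
      - MvPolynomial.X 2 * MvPolynomial.X 3 = _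
  rw [MvPolynomial.X_pow_eq_monomial, X_eq_mono, X_eq_mono, X_eq_mono, X_eq_mono,
    MvPolynomial.monomial_mul, MvPolynomial.monomial_mul, MvPolynomial.monomial_mul]
  show _ = _ + monomial (Finsupp.single 0 1 + Finsupp.single 1 1 + Finsupp.single 3 1) (-1:ℂ)
  rw [sub_eq_add_neg, sub_eq_add_neg, ← map_neg, ← map_neg]
  norm_num [sgl]
  rw [show (Finsupp.single (1:Fin 4) 1 + Finsupp.single 0 1 : Fin 4 →₀ ℕ)
      = Finsupp.single 0 1 + Finsupp.single 1 1 from add_comm _ _]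
  ring


open AddMonoidAlgebra

lemma lt_w : toLex (sgl 1 1) < toLex (sgl 0 1 + sgl 3 1) := by
  apply lexlt 0
  · intro j hj; exact absurd hj (by simp)
  · simp [sgl]

lemma lt_v1 : toLex (sgl 2 1) < toLex (sgl 0 1 + sgl 1 1) := by
  apply lexlt 0
  · intro j hj; exact absurd hj (by simp)
  · simp [sgl]

lemma lt_v2 : toLex (sgl 0 1 + sgl 1 1) < toLex (sgl 0 2 + sgl 3 1) := by
  apply lexlt 0
  · intro j hj; exact absurd hj (by simp)
  · simp [sgl]

lemma lt_t1 : toLex (sgl 2 1 + sgl 3 1) < toLex (sgl 1 2) := by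
  apply lexlt 1
  · intro j hj
    have : j = 0 := by omega
    subst this; simp [sgl]
  · simp [sgl]

lemma lt_t2 : toLex (sgl 1 2) < toLex (sgl 0 1 + sgl 1 1 + sgl 3 1) := by
  apply lexlt 0
  · intro j hj; exact absurd hj (by simp)
  · simp [sgl]

lemma lead_g (i : Fin 7) :
    supDegree toLex (g i) = toLex (sigma i) ∧ leadingCoeff toLex (g i) = eps i := by
  match i with
  | 0 => exact ⟨supDeg_monomial _ one_ne_zero, leadCoeff_monomial _ _⟩
  | 1 => exact ⟨supDeg_monomial _ one_ne_zero, leadCoeff_monomial _ _⟩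
  | 2 => exact ⟨supDeg_monomial _ one_ne_zero, leadCoeff_monomial _ _⟩
  | 5 => exact ⟨supDeg_monomial _ one_ne_zero, leadCoeff_monomial _ _⟩
  | 3 =>
    rw [g3_eq]
    exact lead_pair (by rw [supDeg_monomial _ one_ne_zero]; exact lt_w)
      (neg_ne_zero.mpr one_ne_zero)
  | 4 =>
    rw [g4_eq]
    have h1 := lead_pair (b := sgl 0 1 + sgl 1 1) (c := (1:ℂ))
      (p := monomial (sgl 2 1) (-1:ℂ))
      (by rw [supDeg_monomial _ (neg_ne_zero.mpr one_ne_zero)]; exact lt_v1) one_ne_zero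
    exact lead_pair (by rw [h1.1]; exact lt_v2) (neg_ne_zero.mpr one_ne_zero)
  | 6 =>
    rw [g6_eq]
    have h1 := lead_pair (b := sgl 1 2) (c := (1:ℂ))
      (p := monomial (sgl 2 1 + sgl 3 1) (-1:ℂ))
      (by rw [supDeg_monomial _ (neg_ne_zero.mpr one_ne_zero)]; exact lt_t1) one_ne_zero
    exact lead_pair (by rw [h1.1]; exact lt_t2) (neg_ne_zero.mpr one_ne_zero)


open AddMonoidAlgebra

noncomputable def Phi : (Fin 7 →₀ ℕ) → (Fin 4 →₀ ℕ) := fun m => m.sum fun i k => k • sigma i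

lemma Phi_zero : Phi 0 = 0 := Finsupp.sum_zero_index

lemma Phi_add (f h : Fin 7 →₀ ℕ) : Phi (f + h) = Phi f + Phi h :=
  Finsupp.sum_add_index' (fun i => zero_smul ℕ (sigma i)) (fun i a b => add_smul a b (sigma i))

lemma Phi_single (i : Fin 7) (k : ℕ) : Phi (Finsupp.single i k) = k • sigma i :=
  Finsupp.sum_single_index (zero_smul ℕ (sigma i))

lemma toLex_add' (a b : Fin 4 →₀ ℕ) :
    (toLex (a + b) : Lex (Fin 4 →₀ ℕ)) = toLex a + toLex b := rfl

lemma lead_pow {p : S4} {s : Fin 4 →₀ ℕ} {c : ℂ}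
    (hs : supDegree toLex p = toLex s) (hc : leadingCoeff toLex p = c) (hc0 : c ≠ 0) (k : ℕ) :
    supDegree toLex (p ^ k) = toLex (k • s) ∧ leadingCoeff toLex (p ^ k) = c ^ k := by
  induction k with
  | zero =>
    constructor
    · rw [pow_zero, ← MvPolynomial.C_1, supDegree_toLex_C, zero_smul]; rfl
    · rw [pow_zero, ← MvPolynomial.C_1, leadingCoeff_toLex_C, pow_zero]
  | succ k ih =>
    have hp0 : p ≠ 0 := by
      rw [← leadingCoeff_ne_zero (D := toLex) toLex.injective, hc]; exact hc0
    have hpk0 : (p ^ k) ≠ 0 := by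
      rw [← leadingCoeff_ne_zero (D := toLex) toLex.injective, ih.2]; exact pow_ne_zero k hc0
    have hne : leadingCoeff toLex p * leadingCoeff toLex (p ^ k) ≠ 0 := by
      rw [hc, ih.2]; exact mul_ne_zero hc0 (pow_ne_zero k hc0)
    constructor
    · rw [pow_succ', supDegree_mul toLex.injective toLex_add' hne hp0 hpk0, hs, ih.1,
        ← toLex_add', succ_nsmul']
    · rw [pow_succ', leadingCoeff_mul toLex.injective toLex_add', hc, ih.2, pow_succ']

lemma P_single (i : Fin 7) (k : ℕ) :
    phi (monomial (Finsupp.single i k) (1:ℂ)) = g i ^ k := by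
  rw [phi, aeval_monomial, Finsupp.prod_single_index (h := fun i k => g i ^ k) (pow_zero (g i)),
    map_one, one_mul]

lemma P_add (s t : Fin 7 →₀ ℕ) :
    phi (monomial (s + t) (1:ℂ)) = phi (monomial s 1) * phi (monomial t 1) := by
  rw [← map_mul, MvPolynomial.monomial_mul, one_mul]

lemma lead_P (m : Fin 7 →₀ ℕ) :
    supDegree toLex (phi (monomial m (1:ℂ))) = toLex (Phi m) ∧
      leadingCoeff toLex (phi (monomial m (1:ℂ))) ≠ 0 := by
  induction m using Finsupp.induction₂ with
  | zero =>
    rw [MvPolynomial.monomial_zero', MvPolynomial.C_1, map_one, ← MvPolynomial.C_1 (σ := Fin 4)]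
    constructor
    · rw [supDegree_toLex_C, Phi_zero]; rfl
    · rw [leadingCoeff_toLex_C]; exact one_ne_zero
  | add_single i k f hif hk ih =>
    have hg := lead_g i
    have hpow := lead_pow hg.1 hg.2 (eps_ne_zero i) k
    have hgk0 : g i ^ k ≠ 0 := by
      rw [← leadingCoeff_ne_zero (D := toLex) toLex.injective, hpow.2]
      exact pow_ne_zero k (eps_ne_zero i)
    have hPf0 : phi (monomial f (1:ℂ)) ≠ 0 := by
      rw [← leadingCoeff_ne_zero (D := toLex) toLex.injective]; exact ih.2
    rw [P_add, P_single]
    have hne : leadingCoeff toLex (phi (monomial f (1:ℂ))) * leadingCoeff toLex (g i ^ k) ≠ 0 := by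
      rw [hpow.2]
      exact mul_ne_zero ih.2 (pow_ne_zero k (eps_ne_zero i))
    constructor
    · rw [supDegree_mul toLex.injective toLex_add' hne hPf0 hgk0, hpow.1, ih.1, ← toLex_add',
        Phi_add, Phi_single]
    · rw [leadingCoeff_mul toLex.injective toLex_add']
      exact hne

lemma Phi_eq_sum (m : Fin 7 →₀ ℕ) : Phi m = ∑ i : Fin 7, m i • sigma i :=
  Finsupp.sum_fintype _ _ (fun i => zero_smul ℕ (sigma i))

lemma Phi_apply (m : Fin 7 →₀ ℕ) (j : Fin 4) : Phi m j = ∑ i : Fin 7, m i * sigma i j := by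
  rw [Phi_eq_sum, Finsupp.finset_sum_apply]
  exact Finset.sum_congr rfl fun i _ => by rw [Finsupp.smul_apply, smul_eq_mul]

lemma Phi0 (m : Fin 7 →₀ ℕ) : Phi m 0 = m 0 + m 3 + 2 * m 4 + m 6 := by
  rw [Phi_apply]
  simp [Fin.sum_univ_seven, sigma, sgl, Finsupp.single_apply]
  ring

lemma Phi1 (m : Fin 7 →₀ ℕ) : Phi m 1 = m 1 + m 6 := by
  rw [Phi_apply]
  simp [Fin.sum_univ_seven, sigma, sgl, Finsupp.single_apply]

lemma Phi2 (m : Fin 7 →₀ ℕ) : Phi m 2 = m 2 := by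
  rw [Phi_apply]
  simp [Fin.sum_univ_seven, sigma, sgl, Finsupp.single_apply]

lemma Phi3 (m : Fin 7 →₀ ℕ) : Phi m 3 = m 3 + m 4 + m 5 + m 6 := by
  rw [Phi_apply]
  simp [Fin.sum_univ_seven, sigma, sgl, Finsupp.single_apply]


open AddMonoidAlgebra


lemma pair_le_iff {m : Fin 7 →₀ ℕ} {i j : Fin 7} (hij : i ≠ j) :
    Finsupp.single i 1 + Finsupp.single j 1 ≤ m ↔ 1 ≤ m i ∧ 1 ≤ m j := by
  rw [Finsupp.le_def]
  constructor
  · intro h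
    constructor
    · have := h i
      simpa [Finsupp.single_apply, hij.symm] using this
    · have := h j
      simpa [Finsupp.single_apply, hij] using this
  · intro ⟨h1, h2⟩ s
    rcases eq_or_ne s i with rfl | hsi
    · simpa [Finsupp.single_apply, hij.symm] using h1
    rcases eq_or_ne s j with rfl | hsj
    · simpa [Finsupp.single_apply, hij, hsi.symm] using h2
    simp [Finsupp.single_apply, Ne.symm hsi, Ne.symm hsj]

lemma triple_le_iff {m : Fin 7 →₀ ℕ} :
    Finsupp.single (1:Fin 7) 1 + Finsupp.single 5 1 + Finsupp.single 4 1 ≤ m ↔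
      1 ≤ m 1 ∧ 1 ≤ m 5 ∧ 1 ≤ m 4 := by
  rw [Finsupp.le_def]
  constructor
  · intro h
    refine ⟨?_, ?_, ?_⟩
    · have := h 1; simpa [Finsupp.single_apply] using this
    · have := h 5; simpa [Finsupp.single_apply] using this
    · have := h 4; simpa [Finsupp.single_apply] using this
  · intro ⟨h1, h2, h3⟩ s
    rcases eq_or_ne s 1 with rfl | hs1
    · simpa [Finsupp.single_apply] using h1
    rcases eq_or_ne s 5 with rfl | hs5
    · simpa [Finsupp.single_apply] using h2
    rcases eq_or_ne s 4 with rfl | hs4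
    · simpa [Finsupp.single_apply] using h3
    simp [Finsupp.single_apply, Ne.symm hs1, Ne.symm hs5, Ne.symm hs4]

lemma adm_iff (m : Fin 7 →₀ ℕ) : Admissible m ↔
    ¬ 2 ≤ m 3 ∧ ¬(1 ≤ m 1 ∧ 1 ≤ m 5 ∧ 1 ≤ m 4) ∧ ¬(1 ≤ m 1 ∧ 1 ≤ m 3) ∧
      ¬(1 ≤ m 0 ∧ 1 ≤ m 6) ∧ ¬(1 ≤ m 0 ∧ 1 ≤ m 5) ∧ ¬(1 ≤ m 0 ∧ 1 ≤ m 3) := by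
  have d13 : (1 : Fin 7) ≠ 3 := by decide
  have d06 : (0 : Fin 7) ≠ 6 := by decide
  have d05 : (0 : Fin 7) ≠ 5 := by decide
  have d03 : (0 : Fin 7) ≠ 3 := by decide
  simp only [Admissible, leadMonos, List.forall_mem_cons, List.forall_mem_nil, and_true]
  rw [Finsupp.single_le_iff, triple_le_iff, pair_le_iff d13, pair_le_iff d06,
    pair_le_iff d05, pair_le_iff d03]
  simp

set_option maxHeartbeats 2000000 in
lemma Phi_inj {m m' : Fin 7 →₀ ℕ} (hm : Admissible m) (hm' : Admissible m')
    (h : Phi m = Phi m') : m = m' := by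
  rw [adm_iff] at hm hm'
  have e0 : Phi m 0 = Phi m' 0 := by rw [h]
  have e1 : Phi m 1 = Phi m' 1 := by rw [h]
  have e2 : Phi m 2 = Phi m' 2 := by rw [h]
  have e3 : Phi m 3 = Phi m' 3 := by rw [h]
  rw [Phi0, Phi0] at e0
  rw [Phi1, Phi1] at e1
  rw [Phi2, Phi2] at e2
  rw [Phi3, Phi3] at e3
  have E0 : m 0 = m' 0 := by omega
  have E1 : m 1 = m' 1 := by omega
  have E2 : m 2 = m' 2 := by omega
  have E3 : m 3 = m' 3 := by omega
  have E4 : m 4 = m' 4 := by omega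
  have E5 : m 5 = m' 5 := by omega
  have E6 : m 6 = m' 6 := by omega
  ext j
  match j with
  | 0 => exact E0
  | 1 => exact E1
  | 2 => exact E2
  | 3 => exact E3
  | 4 => exact E4
  | 5 => exact E5
  | 6 => exact E6

noncomputable def mk7 (a b c d e f gg : ℕ) : Fin 7 →₀ ℕ :=
  Finsupp.equivFunOnFinite.symm fun j =>
    match j with
    | 0 => a | 1 => b | 2 => c | 3 => d | 4 => e | 5 => f | 6 => gg

lemma mk7_0 (a b c d e f gg : ℕ) : mk7 a b c d e f gg 0 = a := rfl
lemma mk7_1 (a b c d e f gg : ℕ) : mk7 a b c d e f gg 1 = b := rfl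
lemma mk7_2 (a b c d e f gg : ℕ) : mk7 a b c d e f gg 2 = c := rfl
lemma mk7_3 (a b c d e f gg : ℕ) : mk7 a b c d e f gg 3 = d := rfl
lemma mk7_4 (a b c d e f gg : ℕ) : mk7 a b c d e f gg 4 = e := rfl
lemma mk7_5 (a b c d e f gg : ℕ) : mk7 a b c d e f gg 5 = f := rfl
lemma mk7_6 (a b c d e f gg : ℕ) : mk7 a b c d e f gg 6 = gg := rfl

lemma adm_phi_mk7 (a b c d e f gg : ℕ)
    (h : d ≤ 1 ∧ (d = 0 ∨ (a = 0 ∧ b = 0)) ∧ (a = 0 ∨ (f = 0 ∧ gg = 0)) ∧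
      (b = 0 ∨ f = 0 ∨ e = 0)) {n : Fin 4 →₀ ℕ}
    (h0 : a + d + 2 * e + gg = n 0) (h1 : b + gg = n 1) (h2 : c = n 2)
    (h3 : d + e + f + gg = n 3) :
    Admissible (mk7 a b c d e f gg) ∧ Phi (mk7 a b c d e f gg) = n := by
  constructor
  · rw [adm_iff]
    simp only [mk7_0, mk7_1, mk7_2, mk7_3, mk7_4, mk7_5, mk7_6]
    omega
  · ext j
    have E0 : Phi (mk7 a b c d e f gg) 0 = n 0 := by
      rw [Phi0]; simp only [mk7_0, mk7_3, mk7_4, mk7_6]; omega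
    have E1 : Phi (mk7 a b c d e f gg) 1 = n 1 := by
      rw [Phi1]; simp only [mk7_1, mk7_6]; omega
    have E2 : Phi (mk7 a b c d e f gg) 2 = n 2 := by
      rw [Phi2]; simp only [mk7_2]; omega
    have E3 : Phi (mk7 a b c d e f gg) 3 = n 3 := by
      rw [Phi3]; simp only [mk7_3, mk7_4, mk7_5, mk7_6]; omega
    match j with
    | 0 => exact E0
    | 1 => exact E1
    | 2 => exact E2
    | 3 => exact E3

lemma Phi_surj (n : Fin 4 →₀ ℕ) : ∃ m, Admissible m ∧ Phi m = n := by
  set A := n 0 with hA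
  set B := n 1 with hB
  set C := n 2 with hC
  set D := n 3 with hD
  by_cases hc1 : 2 * D ≤ A
  · exact ⟨_, adm_phi_mk7 (A - 2*D) B C 0 D 0 0 (by omega) (by omega) (by omega) rfl (by omega)⟩
  by_cases hc2 : A ≤ B ∧ A ≤ D
  · exact ⟨_, adm_phi_mk7 0 (B - A) C 0 0 (D - A) A (by omega) (by omega) (by omega) rfl
      (by omega)⟩
  by_cases hc3 : D ≤ A ∧ 2 * D - A ≤ B
  · exact ⟨_, adm_phi_mk7 0 (B - (2*D - A)) C 0 (A - D) 0 (2*D - A) (by omega) (by omega)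
      (by omega) rfl (by omega)⟩
  · exact ⟨_, adm_phi_mk7 0 0 C ((A - B) % 2) ((A - B - (A - B) % 2) / 2)
      (D - B - (A - B) % 2 - (A - B - (A - B) % 2) / 2) B (by omega) (by omega) (by omega) rfl
      (by omega)⟩


open AddMonoidAlgebra

noncomputable def quotLift : (MvPolynomial (Fin 7) ℂ ⧸ I) →ₐ[ℂ] MvPolynomial (Fin 4) ℂ :=
  Ideal.Quotient.liftₐ I phi fun a ha => I_le_ker ha

lemma quotLift_mk (p : MvPolynomial (Fin 7) ℂ) :
    quotLift (Ideal.Quotient.mk I p) = phi p := by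
  rfl

lemma P_ne_zero (m : Fin 7 →₀ ℕ) : phi (monomial m (1:ℂ)) ≠ 0 := by
  rw [← leadingCoeff_ne_zero (D := toLex) toLex.injective]
  exact (lead_P m).2

lemma supDeg_smul {c : ℂ} (hc : c ≠ 0) {p : S4} (hp : p ≠ 0) :
    supDegree toLex (c • p) = supDegree toLex p := by
  rw [MvPolynomial.smul_eq_C_mul,
    supDegree_mul toLex.injective toLex_add'
      (by rw [leadingCoeff_toLex_C]
          exact mul_ne_zero hc ((leadingCoeff_ne_zero toLex.injective).mpr hp))
      (fun h => hc (by simpa using congrArg (MvPolynomial.coeff 0) h)) hp,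
    supDegree_toLex_C, zero_add]

lemma leadCoeff_smul (c : ℂ) (p : S4) :
    leadingCoeff toLex (c • p) = c * leadingCoeff toLex p := by
  rw [MvPolynomial.smul_eq_C_mul, leadingCoeff_mul toLex.injective toLex_add',
    leadingCoeff_toLex_C]

lemma li_P : LinearIndependent ℂ
    (fun m : {m : Fin 7 →₀ ℕ // Admissible m} => phi (monomial m.1 (1:ℂ))) := by
  rw [linearIndependent_iff']
  intro s c hsum i hi
  by_contra hci
  set t := s.filter fun j => c j ≠ 0 with ht
  have hts : t ⊆ s := Finset.filter_subset _ _
  have hsum' : ∑ j ∈ t, c j • phi (monomial j.1 (1:ℂ)) = 0 := by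
    rw [Finset.sum_subset hts (fun j hj hjt => ?_)]
    · exact hsum
    · have : c j = 0 := by
        by_contra hcj
        exact hjt (Finset.mem_filter.mpr ⟨hj, hcj⟩)
      rw [this, zero_smul]
  refine sum_ne_zero_of_injOn_supDegree (D := toLex) ?_ ?_ ?_ hsum'
  · exact ⟨i, Finset.mem_filter.mpr ⟨hi, hci⟩⟩
  · intro j hj
    have hcj : c j ≠ 0 := (Finset.mem_filter.mp hj).2
    exact smul_ne_zero hcj (P_ne_zero j.1)
  · intro j hj k hk hjk
    have hcj : c j ≠ 0 := (Finset.mem_filter.mp hj).2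
    have hck : c k ≠ 0 := (Finset.mem_filter.mp hk).2
    simp only [Function.comp] at hjk
    rw [supDeg_smul hcj (P_ne_zero j.1), supDeg_smul hck (P_ne_zero k.1),
      (lead_P j.1).1, (lead_P k.1).1] at hjk
    exact Subtype.ext (Phi_inj j.2 k.2 (toLex.injective hjk))


/-- The classes of the monomials not divisible by any of the six leading
monomials `W², ZUV, ZW, XT, XU, XW` form a `ℂ`-vector-space basis of the
quotient `ℂ[X,Y,Z,U,V,W,T]/I`. -/
theorem monomial_basis_of_quotient :
    LinearIndependent ℂ
      (fun m : {m : Fin 7 →₀ ℕ // Admissible m} =>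
        Ideal.Quotient.mk I (monomial m.1 (1 : ℂ))) ∧
    Submodule.span ℂ
      (Set.range (fun m : {m : Fin 7 →₀ ℕ // Admissible m} =>
        Ideal.Quotient.mk I (monomial m.1 (1 : ℂ)))) = ⊤ := by
  constructor
  · apply LinearIndependent.of_comp quotLift.toLinearMap
    have : (quotLift.toLinearMap ∘ fun m : {m : Fin 7 →₀ ℕ // Admissible m} =>
        Ideal.Quotient.mk I (monomial m.1 (1 : ℂ)))
        = fun m : {m : Fin 7 →₀ ℕ // Admissible m} => phi (monomial m.1 (1:ℂ)) := by
      funext m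
      simp [quotLift_mk]
    rw [this]
    exact li_P
  · have main : ∀ q : MvPolynomial (Fin 4) ℂ,
        Ideal.Quotient.mk I (psi q) ∈ Submodule.span ℂ
          (Set.range (fun m : {m : Fin 7 →₀ ℕ // Admissible m} =>
            Ideal.Quotient.mk I (monomial m.1 (1 : ℂ)))) := by
      intro q
      induction' he : q.supDegree toLex using WellFoundedLT.induction with d ih generalizing q
      subst he
      by_cases hq : q = 0
      · rw [hq, map_zero, map_zero]
        exact Submodule.zero_mem _
      obtain ⟨m, hadm, hPhi⟩ := Phi_surj (ofLex (q.supDegree toLex))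
      have hlcq : leadingCoeff toLex q ≠ 0 := (leadingCoeff_ne_zero toLex.injective).mpr hq
      set c := leadingCoeff toLex q / leadingCoeff toLex (phi (monomial m (1:ℂ))) with hc
      have hc0 : c ≠ 0 := div_ne_zero hlcq (lead_P m).2
      have hsd : supDegree toLex (c • phi (monomial m (1:ℂ))) = supDegree toLex q := by
        rw [supDeg_smul hc0 (P_ne_zero m), (lead_P m).1, hPhi]
        rfl
      have hlc : leadingCoeff toLex q = leadingCoeff toLex (c • phi (monomial m (1:ℂ))) := by
        rw [leadCoeff_smul, hc, div_mul_cancel₀ _ (lead_P m).2]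
      have hmem : Ideal.Quotient.mk I (psi (c • phi (monomial m (1:ℂ)))) ∈ Submodule.span ℂ
          (Set.range (fun m : {m : Fin 7 →₀ ℕ // Admissible m} =>
            Ideal.Quotient.mk I (monomial m.1 (1 : ℂ)))) := by
        rw [map_smul]
        have h2 := map_smul (Ideal.Quotient.mkₐ ℂ I) c (psi (phi (monomial m (1:ℂ))))
        rw [Ideal.Quotient.mkₐ_eq_mk] at h2
        rw [h2]
        apply Submodule.smul_mem
        have := mk_psi_phi (monomial m (1:ℂ))
        rw [Ideal.Quotient.mkₐ_eq_mk] at this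
        rw [this]
        exact Submodule.subset_span ⟨⟨m, hadm⟩, rfl⟩
      rcases supDegree_sub_lt_of_leadingCoeff_eq toLex.injective hsd.symm hlc with hlt | heq
      · have hq' : q = (q - c • phi (monomial m (1:ℂ))) + c • phi (monomial m (1:ℂ)) := by ring
        rw [hq', map_add, map_add]
        exact Submodule.add_mem _ (ih _ hlt _ rfl) hmem
      · rw [heq]
        exact hmem
    rw [eq_top_iff]
    rintro x -
    obtain ⟨p, rfl⟩ := Ideal.Quotient.mk_surjective x
    have := mk_psi_phi p
    rw [Ideal.Quotient.mkₐ_eq_mk] at this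
    rw [← this]
    exact main (phi p)

end Stmt5
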